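/- arXiv:1111.1549 — 4 statements merged into one kernel-verified Lean document; each statement's English description precedes it below -/
import Mathlib

section
/- Let V = W ⊕ ℝ be a finite-dimensional real vector space, Λ = ℝ₊·λ ⊆ ℝ a ray spanned by a nonzero vector λ, S ⊆ W a linear subspace, K₁ a convex cone in V, and K₂ = S ⊕ Λ. Then K₁ and K₂ cannot be separated by a nonzero linear functional if and only if there exists a vector k ∈ K₁ ∩ K₂ and vectors e₁,…,e_m ∈ W such that span{e₁,…,e_m, S} = W and k ± eᵢ ∈ K₁ for all i (where eᵢ is identified with (eᵢ, 0) ∈ W ⊕ ℝ). -/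
open Set

private lemma stmt5_sep_aux {n : ℕ} {D : Set (Fin n → ℝ)} (hD : Convex ℝ D)
    (hcone : ∀ d ∈ D, ∀ t : ℝ, 0 < t → t • d ∈ D) (hne : D.Nonempty)
    (hneq : D ≠ Set.univ) :
    ∃ φ : (Fin n → ℝ) →ₗ[ℝ] ℝ, φ ≠ 0 ∧ ∀ d ∈ D, φ d ≤ 0 := by
  by_cases hcl : closure D = Set.univ
  · exfalso
    apply hneq
    have hspan : affineSpan ℝ D = ⊤ := by
      have h1 : closure D ⊆ (affineSpan ℝ D : Set (Fin n → ℝ)) :=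
        closure_minimal (subset_affineSpan ℝ D) (affineSpan ℝ D).closed_of_finiteDimensional
      rw [hcl] at h1
      have : (affineSpan ℝ D : Set (Fin n → ℝ)) = univ := univ_subset_iff.1 h1
      rwa [AffineSubspace.coe_eq_univ_iff] at this
    obtain ⟨x, hx⟩ := hD.interior_nonempty_iff_affineSpan_eq_top.2 hspan
    apply eq_univ_of_forall
    intro y
    have hz : (2 : ℝ) • y - x ∈ closure D := by rw [hcl]; trivial
    have hy : y ∈ openSegment ℝ x ((2:ℝ) • y - x) :=
      ⟨1/2, 1/2, by norm_num, by norm_num, by norm_num, by module⟩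
    exact interior_subset (hD.openSegment_interior_closure_subset_interior hx hz hy)
  · obtain ⟨x, hx⟩ : ∃ x, x ∉ closure D := by
      by_contra h
      push_neg at h
      exact hcl (eq_univ_of_forall h)
    obtain ⟨f, u, hfu, hux⟩ :=
      geometric_hahn_banach_closed_point hD.closure isClosed_closure hx
    obtain ⟨a, ha⟩ := hne
    refine ⟨f.toLinearMap, ?_, ?_⟩
    · intro h0
      have h1 : f a < u := hfu a (subset_closure ha)
      have ha0 : f a = 0 := by
        have := LinearMap.congr_fun h0 a; simpa using this
      have hx0 : f x = 0 := by
        have := LinearMap.congr_fun h0 x; simpa using this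
      rw [ha0] at h1; rw [hx0] at hux; linarith
    · intro d hd
      by_contra hpos
      push_neg at hpos
      have h2 : ∀ t : ℝ, 0 < t → t * f d < u := by
        intro t ht
        have := hfu _ (subset_closure (hcone d hd t ht))
        simpa using this
      have hu : 0 < u := lt_trans hpos (by simpa using h2 1 one_pos)
      have h3 := h2 (2 * u / f d) (by positivity)
      have h4 : 2 * u / f d * f d = 2 * u := div_mul_cancel₀ _ (ne_of_gt hpos)
      nlinarith

private lemma stmt5_sep_aux2 {V : Type*} [AddCommGroup V] [Module ℝ V] [FiniteDimensional ℝ V]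
    {D : Set V} (hD : Convex ℝ D)
    (hcone : ∀ d ∈ D, ∀ t : ℝ, 0 < t → t • d ∈ D) (hne : D.Nonempty)
    (hneq : D ≠ Set.univ) :
    ∃ φ : V →ₗ[ℝ] ℝ, φ ≠ 0 ∧ ∀ d ∈ D, φ d ≤ 0 := by
  set L : V ≃ₗ[ℝ] (Fin (Module.finrank ℝ V) → ℝ) := (Module.finBasis ℝ V).equivFun with hL
  have hD' : Convex ℝ (L.toLinearMap '' D) := hD.linear_image _
  have hcone' : ∀ d ∈ L.toLinearMap '' D, ∀ t : ℝ, 0 < t → t • d ∈ L.toLinearMap '' D := by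
    rintro _ ⟨d, hd, rfl⟩ t ht
    exact ⟨t • d, hcone d hd t ht, map_smul _ _ _⟩
  have hne' : (L.toLinearMap '' D).Nonempty := hne.image _
  have hneq' : L.toLinearMap '' D ≠ Set.univ := by
    intro h
    apply hneq
    apply eq_univ_of_forall
    intro v
    have : L v ∈ L.toLinearMap '' D := h ▸ trivial
    obtain ⟨d, hd, hdv⟩ := this
    have : d = v := L.injective hdv
    rwa [← this]
  obtain ⟨φ', hφ'0, hφ'⟩ := stmt5_sep_aux hD' hcone' hne' hneq'
  refine ⟨φ'.comp L.toLinearMap, ?_, ?_⟩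
  · intro h0
    apply hφ'0
    refine LinearMap.ext fun w => ?_
    have := LinearMap.congr_fun h0 (L.symm w)
    simpa using this
  · intro d hd
    exact hφ' _ ⟨d, hd, rfl⟩

/-- Geometric characterisation of non-separability: in `V = W ⊕ ℝ` with `Λ = ℝ₊·λ`,
`S ⊆ W` a linear subspace, `K₁` a convex cone and `K₂ = S ⊕ Λ`, the cones `K₁` and `K₂`
cannot be separated by a nonzero linear functional iff there are `k ∈ K₁ ∩ K₂` and
vectors `e₁,…,e_m ∈ W` with `span{e₁,…,e_m, S} = W` and `k ± eᵢ ∈ K₁` for all `i`. -/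
theorem stmt5 {W : Type*} [AddCommGroup W] [Module ℝ W] [FiniteDimensional ℝ W]
    (lam : ℝ) (hlam : lam ≠ 0) (S : Submodule ℝ W)
    (K₁ : Set (W × ℝ)) (hconv : Convex ℝ K₁)
    (hcone : ∀ k ∈ K₁, ∀ t : ℝ, 0 < t → t • k ∈ K₁) :
    (¬ ∃ φ : W × ℝ →ₗ[ℝ] ℝ, φ ≠ 0 ∧
        ∀ k₁ ∈ K₁, ∀ s ∈ S, ∀ t : ℝ, 0 < t → φ (s, t * lam) ≤ φ k₁) ↔
      ∃ k ∈ K₁ ∩ {x : W × ℝ | ∃ s ∈ S, ∃ t : ℝ, 0 < t ∧ x = (s, t * lam)},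
        ∃ (m : ℕ) (e : Fin m → W),
          Submodule.span ℝ (Set.range e) ⊔ S = ⊤ ∧
          ∀ i, k + (e i, (0 : ℝ)) ∈ K₁ ∧ k - (e i, (0 : ℝ)) ∈ K₁ := by
  classical
  have hadd : ∀ x ∈ K₁, ∀ y ∈ K₁, x + y ∈ K₁ := by
    intro x hx y hy
    have h := hconv hx hy (by norm_num : (0:ℝ) ≤ 1/2) (by norm_num : (0:ℝ) ≤ 1/2) (by norm_num)
    have h2 := hcone _ h 2 two_pos
    have h3 : (2:ℝ) • ((1/2:ℝ) • x + (1/2:ℝ) • y) = x + y := by module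
    rwa [h3] at h2
  constructor
  · -- forward direction
    intro hns
    have hK1ne : K₁.Nonempty := by
      by_contra h
      rw [Set.not_nonempty_iff_eq_empty] at h
      refine hns ⟨LinearMap.snd ℝ W ℝ, ?_, ?_⟩
      · intro h0
        have := LinearMap.congr_fun h0 (0, 1)
        simp at this
      · intro k₁ hk₁
        rw [h] at hk₁
        exact absurd hk₁ (Set.notMem_empty _)
    obtain ⟨k₀, hk₀⟩ := hK1ne
    have hDuniv : ∀ v : W × ℝ,
        ∃ k₁ ∈ K₁, ∃ s ∈ S, ∃ t : ℝ, 0 < t ∧ v = (s, t * lam) - k₁ := by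
      set Dset : Set (W × ℝ) :=
        {v | ∃ k₁ ∈ K₁, ∃ s ∈ S, ∃ t : ℝ, 0 < t ∧ v = (s, t * lam) - k₁} with hDdef
      suffices h : Dset = Set.univ by
        intro v
        have : v ∈ Dset := by rw [h]; trivial
        exact this
      by_contra hneq
      have hconvD : Convex ℝ Dset := by
        rintro v ⟨k₁, hk₁, s, hs, t, ht, rfl⟩ v' ⟨k₁', hk₁', s', hs', t', ht', rfl⟩ a b ha hb hab
        refine ⟨a • k₁ + b • k₁', hconv hk₁ hk₁' ha hb hab,
          a • s + b • s', S.add_mem (S.smul_mem _ hs) (S.smul_mem _ hs'),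
          a * t + b * t', ?_, ?_⟩
        · rcases ha.eq_or_lt' with h | h
          · have ha0 : a = 0 := h
            have hb1 : b = 1 := by linarith
            have : a * t + b * t' = t' := by rw [ha0, hb1]; ring
            linarith
          · nlinarith [mul_nonneg hb ht'.le]
        · rw [Prod.ext_iff]
          constructor
          · simp only [Prod.fst_add, Prod.fst_sub, Prod.smul_fst, Prod.mk_add_mk, Prod.mk_sub_mk]
            module
          · simp only [Prod.snd_add, Prod.snd_sub, Prod.smul_snd, smul_eq_mul]
            ring
      have hconeD : ∀ d ∈ Dset, ∀ c : ℝ, 0 < c → c • d ∈ Dset := by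
        rintro _ ⟨k₁, hk₁, s, hs, t, ht, rfl⟩ c hc
        refine ⟨c • k₁, hcone _ hk₁ c hc, c • s, S.smul_mem _ hs, c * t, mul_pos hc ht, ?_⟩
        rw [Prod.ext_iff]
        constructor
        · simp only [Prod.smul_fst, Prod.fst_sub, Prod.mk_sub_mk]
          module
        · simp only [Prod.smul_snd, Prod.snd_sub, Prod.mk_sub_mk, smul_eq_mul]
          ring
      have hneD : Dset.Nonempty :=
        ⟨(0, 1 * lam) - k₀, k₀, hk₀, 0, S.zero_mem, 1, one_pos, rfl⟩
      obtain ⟨φ, hφ0, hφle⟩ := stmt5_sep_aux2 hconvD hconeD hneD hneq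
      refine hns ⟨φ, hφ0, fun k₁ hk₁ s hs t ht => ?_⟩
      have h := hφle _ ⟨k₁, hk₁, s, hs, t, ht, rfl⟩
      rw [map_sub] at h
      linarith
    choose A hAK σ hσ τ hτ heq using hDuniv
    have hk2 : A 0 = (σ 0, τ 0 * lam) := (sub_eq_zero.mp (heq 0).symm).symm
    set n := Module.finrank ℝ W with hn
    set w : Module.Basis (Fin n) ℝ W := Module.finBasis ℝ W with hw
    set aK : Fin n → W × ℝ := fun j => A (-(w j, (0:ℝ))) with haKdef
    set bK : Fin n → W × ℝ := fun j => A ((w j, (0:ℝ))) with hbKdef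
    set σm : Fin n → W := fun j => σ (-(w j, (0:ℝ))) with hσmdef
    set τm : Fin n → ℝ := fun j => τ (-(w j, (0:ℝ))) with hτmdef
    set σp : Fin n → W := fun j => σ ((w j, (0:ℝ))) with hσpdef
    set τp : Fin n → ℝ := fun j => τ ((w j, (0:ℝ))) with hτpdef
    set α : Fin n → ℝ := fun j => (τm j - τp j) / τ 0 with hαdef
    set E : Fin n → W := fun j => σm j - σp j + (2:ℝ) • w j - α j • σ 0 with hEdef
    have haK : ∀ j, aK j = (σm j + w j, τm j * lam) := by
      intro j
      have h := heq (-(w j, (0:ℝ)))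
      rw [eq_sub_iff_add_eq] at h
      have h2 : A (-(w j, (0:ℝ))) =
          (σ (-(w j, (0:ℝ))), τ (-(w j, (0:ℝ))) * lam) - (-(w j, (0:ℝ))) :=
        eq_sub_of_add_eq (by rw [add_comm]; exact h)
      simp only [haKdef, hσmdef, hτmdef]
      rw [h2]
      simp [Prod.ext_iff, sub_neg_eq_add]
    have hbK : ∀ j, bK j = (σp j - w j, τp j * lam) := by
      intro j
      have h := heq ((w j, (0:ℝ)))
      rw [eq_sub_iff_add_eq] at h
      have h2 : A ((w j, (0:ℝ))) =
          (σ ((w j, (0:ℝ))), τ ((w j, (0:ℝ))) * lam) - ((w j, (0:ℝ))) :=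
        eq_sub_of_add_eq (by rw [add_comm]; exact h)
      simp only [hbKdef, hσpdef, hτpdef]
      rw [h2]
      simp [Prod.ext_iff]
    have hE : ∀ j, ((E j, (0:ℝ)) : W × ℝ) = aK j - bK j - α j • A 0 := by
      intro j
      rw [haK j, hbK j, hk2, Prod.ext_iff]
      constructor
      · simp only [hEdef, Prod.fst_sub, Prod.smul_fst, Prod.mk_sub_mk, Prod.mk_add_mk]
        module
      · simp only [Prod.snd_sub, Prod.smul_snd, Prod.mk_sub_mk, Prod.mk_add_mk, smul_eq_mul,
          hαdef, hτmdef, hτpdef]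
        field_simp [ne_of_gt (hτ 0)]
        ring
    have hsumK : ∀ (s : Finset (Fin n)) (f : Fin n → W × ℝ),
        (∀ j ∈ s, f j ∈ K₁) → ∀ x ∈ K₁, x + ∑ j ∈ s, f j ∈ K₁ := by
      intro s
      induction s using Finset.induction_on with
      | empty => intro f _ x hx; simpa using hx
      | @insert a s ha ih =>
        intro f hf x hx
        rw [Finset.sum_insert ha, ← add_assoc]
        exact ih f (fun j hj => hf j (Finset.mem_insert_of_mem hj)) _
          (hadd x hx _ (hf _ (Finset.mem_insert_self _ _)))
    set C : ℝ := 1 + ∑ j, |α j| with hCdef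
    have hαsum : ∀ j, |α j| ≤ ∑ i, |α i| :=
      fun j => Finset.single_le_sum (f := fun i => |α i|) (fun i _ => abs_nonneg _) (Finset.mem_univ j)
    have hsumabs : (0:ℝ) ≤ ∑ i, |α i| := Finset.sum_nonneg fun i _ => abs_nonneg _
    have hCpos : 0 < C := by rw [hCdef]; linarith
    have hCm : ∀ j, 0 < C - α j := by
      intro j
      have h1 := hαsum j
      have h2 := le_abs_self (α j)
      rw [hCdef]; linarith
    have hCp : ∀ j, 0 < C + α j := by
      intro j
      have h1 := hαsum j
      have h2 := neg_abs_le (α j)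
      rw [hCdef]; linarith
    clear_value C
    set kstar : W × ℝ := C • A 0 + ∑ j, (aK j + bK j) with hkstardef
    have haKK : ∀ j, aK j ∈ K₁ := fun j => hAK _
    have hbKK : ∀ j, bK j ∈ K₁ := fun j => hAK _
    have hkstarK1 : kstar ∈ K₁ :=
      hsumK Finset.univ _ (fun j _ => hadd _ (haKK j) _ (hbKK j)) _
        (hcone _ (hAK 0) C hCpos)
    have habpair : ∀ j, aK j + bK j = ((σm j + σp j : W), (τm j + τp j) * lam) := by
      intro j
      rw [haK j, hbK j, Prod.ext_iff]
      constructor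
      · simp only [Prod.fst_add, Prod.mk_add_mk, Prod.mk_sub_mk]
        module
      · simp only [Prod.snd_add, Prod.mk_add_mk, Prod.mk_sub_mk]
        ring
    have hkstarK2 : kstar ∈ {x : W × ℝ | ∃ s ∈ S, ∃ t : ℝ, 0 < t ∧ x = (s, t * lam)} := by
      refine ⟨C • σ 0 + ∑ j, (σm j + σp j),
        S.add_mem (S.smul_mem _ (hσ 0)) (Submodule.sum_mem _ fun j _ =>
          S.add_mem (hσ _) (hσ _)),
        C * τ 0 + ∑ j, (τm j + τp j), ?_, ?_⟩
      · have h1 : 0 < C * τ 0 := mul_pos hCpos (hτ 0)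
        have h2 : (0:ℝ) ≤ ∑ j, (τm j + τp j) := by
          apply Finset.sum_nonneg
          intro j _
          have h3 := hτ (-(w j, (0:ℝ)))
          have h4 := hτ ((w j, (0:ℝ)))
          simp only [hτmdef, hτpdef]
          linarith
        linarith
      · rw [hkstardef, hk2]
        rw [Finset.sum_congr rfl (fun j _ => habpair j)]
        rw [← prod_mk_sum]
        rw [Prod.ext_iff]
        constructor
        · simp only [Prod.fst_add, Prod.smul_fst, Prod.smul_mk, Prod.mk_add_mk]
        · simp only [Prod.snd_add, Prod.smul_snd, Prod.smul_mk, Prod.mk_add_mk, smul_eq_mul]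
          rw [add_mul, Finset.sum_mul, ← mul_assoc]
    refine ⟨kstar, ⟨hkstarK1, hkstarK2⟩, n, E, ?_, ?_⟩
    · -- spanning
      rw [eq_top_iff, ← w.span_eq]
      apply Submodule.span_le.2
      rintro _ ⟨j, rfl⟩
      have h1 : E j ∈ Submodule.span ℝ (Set.range E) ⊔ S :=
        Submodule.mem_sup_left (Submodule.subset_span ⟨j, rfl⟩)
      have h2 : σm j - σp j - α j • σ 0 ∈ Submodule.span ℝ (Set.range E) ⊔ S :=
        Submodule.mem_sup_right (S.sub_mem (S.sub_mem (hσ _) (hσ _)) (S.smul_mem _ (hσ 0)))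
      have h3 : w j = (1/2:ℝ) • E j - (1/2:ℝ) • (σm j - σp j - α j • σ 0) := by
        rw [hEdef]; module
      rw [SetLike.mem_coe, h3]
      exact Submodule.sub_mem _ (Submodule.smul_mem _ _ h1) (Submodule.smul_mem _ _ h2)
    · intro i
      have hsplit := Finset.sum_erase_add Finset.univ (fun j => aK j + bK j) (Finset.mem_univ i)
      constructor
      · have key : kstar + ((E i, (0:ℝ)) : W × ℝ) =
            ((C - α i) • A 0 + (2:ℝ) • aK i) + ∑ j ∈ Finset.univ.erase i, (aK j + bK j) := by
          rw [hE i, hkstardef, ← hsplit]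
          module
        rw [key]
        exact hsumK _ _ (fun j _ => hadd _ (haKK j) _ (hbKK j)) _
          (hadd _ (hcone _ (hAK 0) _ (hCm i)) _ (hcone _ (haKK i) 2 two_pos))
      · have key : kstar - ((E i, (0:ℝ)) : W × ℝ) =
            ((C + α i) • A 0 + (2:ℝ) • bK i) + ∑ j ∈ Finset.univ.erase i, (aK j + bK j) := by
          rw [hE i, hkstardef, ← hsplit]
          module
        rw [key]
        exact hsumK _ _ (fun j _ => hadd _ (haKK j) _ (hbKK j)) _
          (hadd _ (hcone _ (hAK 0) _ (hCp i)) _ (hcone _ (hbKK i) 2 two_pos))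
  · -- backward direction
    rintro ⟨k, ⟨hk1, s₀, hs₀S, t₀, ht₀, hkeq⟩, m, e, hspan, hpm⟩ ⟨φ, hφ0, hsep⟩
    have hS0 : ∀ s ∈ S, φ (s, (0:ℝ)) = 0 := by
      have hSle : ∀ s ∈ S, φ (s, (0:ℝ)) ≤ 0 := by
        intro s hs
        have h := hsep k hk1 (s + s₀) (S.add_mem hs hs₀S) t₀ ht₀
        have h2 : ((s + s₀, t₀ * lam) : W × ℝ) = (s, (0:ℝ)) + k := by
          rw [hkeq]; simp [Prod.mk_add_mk]
        rw [h2, map_add] at h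
        linarith
      intro s hs
      have h1 := hSle s hs
      have h2 := hSle (-s) (S.neg_mem hs)
      have h3 : φ (-s, (0:ℝ)) = -φ (s, (0:ℝ)) := by
        rw [show ((-s, (0:ℝ)) : W × ℝ) = -(s, (0:ℝ)) by simp, map_neg]
      linarith
    have hc : φ (0, lam) = 0 := by
      have h1 := hsep k hk1 s₀ hs₀S (t₀ + 1) (by linarith)
      have h2 := hsep k hk1 s₀ hs₀S (t₀ / 2) (by linarith)
      have e1 : ((s₀, (t₀ + 1) * lam) : W × ℝ) = k + (0, lam) := by
        rw [hkeq]; simp [Prod.mk_add_mk]; ring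
      have e2 : ((s₀, (t₀ / 2) * lam) : W × ℝ) = k + (-(t₀ / 2)) • ((0, lam) : W × ℝ) := by
        rw [hkeq]; simp [Prod.mk_add_mk, Prod.smul_mk]; ring
      rw [e1, map_add] at h1
      rw [e2, map_add, map_smul, smul_eq_mul] at h2
      nlinarith
    have hei : ∀ i, φ (e i, (0:ℝ)) = 0 := by
      intro i
      have h1 := hsep _ (hpm i).1 s₀ hs₀S t₀ ht₀
      have h2 := hsep _ (hpm i).2 s₀ hs₀S t₀ ht₀
      rw [← hkeq, map_add] at h1
      rw [← hkeq, map_sub] at h2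
      linarith
    have hψ : ∀ x : W, φ (x, (0:ℝ)) = 0 := by
      intro x
      set ψ : W →ₗ[ℝ] ℝ := φ.comp (LinearMap.inl ℝ W ℝ) with hψdef
      have hker : Submodule.span ℝ (Set.range e) ⊔ S ≤ LinearMap.ker ψ := by
        apply sup_le
        · apply Submodule.span_le.2
          rintro _ ⟨i, rfl⟩
          simp only [SetLike.mem_coe, LinearMap.mem_ker, hψdef, LinearMap.comp_apply,
            LinearMap.inl_apply]
          exact hei i
        · intro s hs
          simp only [LinearMap.mem_ker, hψdef, LinearMap.comp_apply, LinearMap.inl_apply]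
          exact hS0 s hs
      have : x ∈ LinearMap.ker ψ := hker (hspan ▸ Submodule.mem_top)
      simpa [hψdef] using this
    apply hφ0
    refine LinearMap.ext fun p => ?_
    obtain ⟨x, r⟩ := p
    have hx : ((x, r) : W × ℝ) = (x, (0:ℝ)) + (r / lam) • ((0, lam) : W × ℝ) := by
      rw [Prod.ext_iff]
      constructor
      · simp
      · simp [div_mul_cancel₀ _ hlam]
    rw [hx, map_add, map_smul, hψ x, hc, smul_eq_mul]
    simp
end

section
/- Let a : [0,1] → ℝ be bounded and measurable, h : [0,1] → [0,1] continuous, and g : [0,1] → [0,1] a C¹ map with nowhere-vanishing derivative. Then the function G(s) := ∫₀¹ |a(g(t)·h(s)) − a(g(t)·h(s₀))| dt is continuous at every point s₀ ∈ [0,1] with h(s₀) ≠ 0. -/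
open MeasureTheory Set

/-- Scaling bound via change of variables. -/
lemma scale_bound (g g' : ℝ → ℝ)
    (hg : ∀ t ∈ Icc (0 : ℝ) 1, HasDerivAt g (g' t) t)
    (m : ℝ) (hm : 0 < m) (hm' : ∀ t ∈ Icc (0 : ℝ) 1, m ≤ |g' t|)
    (hginj : Set.InjOn g (Icc 0 1))
    (D : ℝ → ℝ) (hD : Measurable D) (hD0 : ∀ x, 0 ≤ D x) (hDi : Integrable D)
    (c : ℝ) (hc : c ≠ 0) :
    IntegrableOn (fun t => D (g t * c)) (Icc 0 1) ∧
      ∫ t in Icc (0 : ℝ) 1, D (g t * c) ≤ (∫ x, D x) / (|c| * m) := by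
  set S : Set ℝ := Icc (0:ℝ) 1 with hS
  have hgcont : ContinuousOn g S := fun t ht => ((hg t ht).continuousAt).continuousWithinAt
  set F : ℝ → ℝ := fun t => g t * c with hF
  set F' : ℝ → ℝ := fun t => g' t * c with hF'
  have hFd : ∀ t ∈ S, HasDerivWithinAt F (F' t) S t :=
    fun t ht => ((hg t ht).mul_const c).hasDerivWithinAt
  have hFinj : Set.InjOn F S := fun x hx y hy hxy =>
    hginj hx hy (mul_right_cancel₀ hc hxy)
  have hjac : ∫ x in F '' S, D x = ∫ t in S, |F' t| • D (F t) :=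
    integral_image_eq_integral_abs_deriv_smul measurableSet_Icc hFd hFinj D
  have hRHSint : IntegrableOn (fun t => |F' t| • D (F t)) S := by
    exact (integrableOn_image_iff_integrableOn_abs_deriv_smul measurableSet_Icc hFd hFinj D).1
      hDi.integrableOn
  have hcm : 0 < |c| * m := mul_pos (abs_pos.2 hc) hm
  have hpt : ∀ t ∈ S, D (F t) ≤ (|c| * m)⁻¹ * (|F' t| * D (F t)) := by
    intro t ht
    have h1 : |c| * m ≤ |F' t| := by
      rw [hF']
      simp only [abs_mul]
      calc |c| * m ≤ |c| * |g' t| := by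
            exact mul_le_mul_of_nonneg_left (hm' t ht) (abs_nonneg c)
        _ = |g' t| * |c| := mul_comm _ _
    have h2 := mul_le_mul_of_nonneg_right h1 (hD0 (F t))
    rw [mul_comm] at h2
    calc D (F t) = (|c| * m)⁻¹ * (D (F t) * (|c| * m)) := by field_simp
      _ ≤ (|c| * m)⁻¹ * (|F' t| * D (F t)) := by
          apply mul_le_mul_of_nonneg_left _ (by positivity)
          linarith [h2]
  have hASM : AEStronglyMeasurable (fun t => D (F t)) (volume.restrict S) := by
    have : AEMeasurable F (volume.restrict S) :=
      ((hgcont.mul continuousOn_const).aemeasurable measurableSet_Icc)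
    exact (hD.comp_aemeasurable this).aestronglyMeasurable
  have hLHSint : IntegrableOn (fun t => D (F t)) S := by
    refine (hRHSint.const_mul ((|c| * m)⁻¹)).mono' hASM ?_
    refine (ae_restrict_iff' measurableSet_Icc).2 (Filter.Eventually.of_forall fun t ht => ?_)
    rw [Real.norm_eq_abs, abs_of_nonneg (hD0 _)]
    simpa [smul_eq_mul] using hpt t ht
  refine ⟨hLHSint, ?_⟩
  have step1 : ∫ t in S, D (F t) ≤ ∫ t in S, (|c| * m)⁻¹ * (|F' t| * D (F t)) := by
    refine setIntegral_mono_on hLHSint ?_ measurableSet_Icc hpt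
    have := hRHSint.const_mul ((|c| * m)⁻¹); simp only [smul_eq_mul] at this; exact this
  have step2 : ∫ t in S, (|c| * m)⁻¹ * (|F' t| * D (F t)) = (|c| * m)⁻¹ * ∫ x in F '' S, D x := by
    rw [integral_const_mul, hjac]
    simp [smul_eq_mul]
  have step3 : ∫ x in F '' S, D x ≤ ∫ x, D x :=
    setIntegral_le_integral hDi (Filter.Eventually.of_forall hD0)
  calc ∫ t in S, D (F t) ≤ (|c| * m)⁻¹ * ∫ x in F '' S, D x := by rw [← step2]; exact step1
    _ ≤ (|c| * m)⁻¹ * ∫ x, D x := by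
        exact mul_le_mul_of_nonneg_left step3 (by positivity)
    _ = (∫ x, D x) / (|c| * m) := by rw [div_eq_inv_mul, mul_comm] -- check

lemma g_injOn (g g' : ℝ → ℝ)
    (hg : ∀ t ∈ Icc (0 : ℝ) 1, HasDerivAt g (g' t) t)
    (hg'0 : ∀ t ∈ Icc (0 : ℝ) 1, g' t ≠ 0) : Set.InjOn g (Icc 0 1) := by
  have hgcont : ContinuousOn g (Icc (0:ℝ) 1) :=
    fun t ht => ((hg t ht).continuousAt).continuousWithinAt
  have key : ∀ x ∈ Icc (0:ℝ) 1, ∀ y ∈ Icc (0:ℝ) 1, x < y → g x ≠ g y := by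
    intro x hx y hy hxy
    have hsub : Icc x y ⊆ Icc (0:ℝ) 1 := Icc_subset_Icc hx.1 hy.2
    obtain ⟨cc, hcc, hceq⟩ := exists_hasDerivAt_eq_slope g g' hxy (hgcont.mono hsub)
      (fun z hz => hg z (hsub ⟨hz.1.le, hz.2.le⟩))
    intro hgeq
    rw [hgeq, sub_self, zero_div] at hceq
    exact hg'0 cc (hsub ⟨hcc.1.le, hcc.2.le⟩) hceq
  intro x hx y hy hxy
  rcases lt_trichotomy x y with hlt | heq | hgt
  · exact absurd hxy (key x hx y hy hlt)
  · exact heq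
  · exact absurd hxy.symm (key y hy x hx hgt)

/-- Let `a` be bounded measurable, `h : [0,1] → [0,1]` continuous, and `g : [0,1] → [0,1]`
a `C¹` map with nowhere-vanishing derivative.  Then
`G(s) = ∫₀¹ |a(g(t)·h(s)) − a(g(t)·h(s₀))| dt` is continuous at every `s₀ ∈ [0,1]`
with `h(s₀) ≠ 0`. -/
theorem stmt7 (a : ℝ → ℝ) (ha : Measurable a) (M : ℝ) (haM : ∀ t, |a t| ≤ M)
    (h : ℝ → ℝ) (hh : ContinuousOn h (Icc 0 1)) (hhmap : MapsTo h (Icc 0 1) (Icc 0 1))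
    (g g' : ℝ → ℝ)
    (hg : ∀ t ∈ Icc (0 : ℝ) 1, HasDerivAt g (g' t) t)
    (hg' : ContinuousOn g' (Icc 0 1))
    (hg'0 : ∀ t ∈ Icc (0 : ℝ) 1, g' t ≠ 0)
    (hgmap : MapsTo g (Icc 0 1) (Icc 0 1))
    (s₀ : ℝ) (hs₀ : s₀ ∈ Icc (0 : ℝ) 1) (hs₀0 : h s₀ ≠ 0) :
    ContinuousWithinAt
      (fun s => ∫ t in (0 : ℝ)..1, |a (g t * h s) - a (g t * h s₀)|) (Icc 0 1) s₀ := by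
  
  have hgcont : ContinuousOn g (Icc (0:ℝ) 1) :=
    fun t ht => ((hg t ht).continuousAt).continuousWithinAt
  have hrw : (fun s => ∫ t in (0 : ℝ)..1, |a (g t * h s) - a (g t * h s₀)|)
      = fun s => ∫ t in Icc (0:ℝ) 1, |a (g t * h s) - a (g t * h s₀)| := by
    funext s
    rw [intervalIntegral.integral_of_le zero_le_one, integral_Icc_eq_integral_Ioc]
  unfold ContinuousWithinAt
  rw [hrw]
  have hval : ∫ t in Icc (0:ℝ) 1, |a (g t * h s₀) - a (g t * h s₀)| = 0 := by simp
  suffices H : Filter.Tendsto (fun s => ∫ t in Icc (0:ℝ) 1, |a (g t * h s) - a (g t * h s₀)|)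
      (nhdsWithin s₀ (Icc 0 1)) (nhds 0) by simpa [hval] using H
  -- basic data
  set c₀ : ℝ := h s₀ with hc₀def
  have hMnn : 0 ≤ M := le_trans (abs_nonneg _) (haM 0)
  -- minimum of |g'|
  obtain ⟨t₁, ht₁, hmin⟩ := isCompact_Icc.exists_isMinOn (nonempty_Icc.2 zero_le_one) hg'.abs
  set m : ℝ := |g' t₁| with hmdef
  have hm : 0 < m := abs_pos.2 (hg'0 t₁ ht₁)
  have hm' : ∀ t ∈ Icc (0:ℝ) 1, m ≤ |g' t| := fun t ht => hmin ht
  have hginj : Set.InjOn g (Icc 0 1) := g_injOn g g' hg hg'0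
  -- truncated a
  set f : ℝ → ℝ := (Icc (-1:ℝ) 1).indicator a with hfdef
  have hfmeas : Measurable f := ha.indicator measurableSet_Icc
  have hfbd : ∀ x, |f x| ≤ M := by
    intro x
    by_cases hx : x ∈ Icc (-1:ℝ) 1
    · rw [hfdef]; simp [indicator_of_mem hx]; exact haM x
    · rw [hfdef]; simp [indicator_of_notMem hx, hMnn]
  have hfint : Integrable f := by
    refine (Measure.integrableOn_of_bounded (by simp) ha.aestronglyMeasurable
      (Filter.Eventually.of_forall fun x => by simpa [Real.norm_eq_abs] using haM x)
      : IntegrableOn a (Icc (-1:ℝ) 1)).integrable_indicator measurableSet_Icc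
  -- agreement of a and f on products
  have hagree : ∀ t ∈ Icc (0:ℝ) 1, ∀ c ∈ Icc (0:ℝ) 1, a (g t * c) = f (g t * c) := by
    intro t ht c hc
    have hgt := hgmap ht
    have : g t * c ∈ Icc (-1:ℝ) 1 := by
      constructor
      · nlinarith [hgt.1, hgt.2, hc.1, hc.2]
      · nlinarith [hgt.1, hgt.2, hc.1, hc.2]
    rw [hfdef, indicator_of_mem this]
  rw [NormedAddCommGroup.tendsto_nhds_zero]
  intro ε hε
  set l := nhdsWithin s₀ (Icc (0:ℝ) 1) with hldef
  have hc₀pos : 0 < |c₀| := abs_pos.2 hs₀0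
  set δ : ℝ := |c₀| * m * ε / 8 with hδdef
  have hδpos : 0 < δ := by positivity
  obtain ⟨φ, φsupp, hφδ, φcont, φint⟩ := hfint.exists_hasCompactSupport_integral_sub_le hδpos
  set D : ℝ → ℝ := fun x => |f x - φ x| with hDdef
  have hDmeas : Measurable D := (hfmeas.sub φcont.measurable).abs
  have hD0 : ∀ x, 0 ≤ D x := fun x => abs_nonneg _
  have hDint : Integrable D := (hfint.sub φint).abs
  have hDδ : ∫ x, D x ≤ δ := by simpa [Real.norm_eq_abs] using hφδ
  obtain ⟨C, hC⟩ := φsupp.exists_bound_of_continuous φcont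
  have E0 : ∀ᶠ s in l, s ∈ Icc (0:ℝ) 1 := eventually_mem_nhdsWithin
  have hhc : Filter.Tendsto h l (nhds c₀) := hh s₀ hs₀
  have E1 : ∀ᶠ s in l, |c₀| / 2 < |h s| := by
    have habs : Filter.Tendsto (fun s => |h s|) l (nhds |c₀|) :=
      (continuous_abs.tendsto _).comp hhc
    exact habs.eventually (eventually_gt_nhds (by linarith))
  have hψ : ∀ c : ℝ, ContinuousOn (fun t => |φ (g t * c) - φ (g t * c₀)|) (Icc (0:ℝ) 1) := by
    intro c
    exact ((φcont.comp_continuousOn (hgcont.mul continuousOn_const)).sub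
      (φcont.comp_continuousOn (hgcont.mul continuousOn_const))).abs
  have E2 : Filter.Tendsto (fun s => ∫ t in Icc (0:ℝ) 1, |φ (g t * h s) - φ (g t * c₀)|) l
      (nhds 0) := by
    have key := MeasureTheory.tendsto_integral_filter_of_dominated_convergence
      (μ := volume.restrict (Icc (0:ℝ) 1)) (l := l)
      (F := fun s t => |φ (g t * h s) - φ (g t * c₀)|)
      (f := fun _ => (0:ℝ)) (bound := fun _ => 2 * C)
      (Filter.Eventually.of_forall fun s =>
        ((hψ (h s)).aestronglyMeasurable measurableSet_Icc))
      (Filter.Eventually.of_forall fun s => Filter.Eventually.of_forall fun t => by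
        have h1 := norm_sub_le (φ (g t * h s)) (φ (g t * c₀))
        have h2 := hC (g t * h s)
        have h3 := hC (g t * c₀)
        rw [Real.norm_eq_abs, abs_abs]
        simp only [Real.norm_eq_abs] at h1 h2 h3
        linarith)
      (integrableOn_const measure_Icc_lt_top.ne)
      ((ae_restrict_iff' measurableSet_Icc).2 (Filter.Eventually.of_forall fun t ht => by
        have h1 : Filter.Tendsto (fun s => g t * h s) l (nhds (g t * c₀)) :=
          tendsto_const_nhds.mul hhc
        have h2 : Filter.Tendsto (fun s => |φ (g t * h s) - φ (g t * c₀)|) l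
            (nhds (|φ (g t * c₀) - φ (g t * c₀)|)) :=
          (((φcont.tendsto _).comp h1).sub tendsto_const_nhds).abs
        simpa using h2))
    simpa using key
  have E2' : ∀ᶠ s in l, (∫ t in Icc (0:ℝ) 1, |φ (g t * h s) - φ (g t * c₀)|) < ε / 2 :=
    E2.eventually (eventually_lt_nhds (by linarith))
  filter_upwards [E0, E1, E2'] with s hsmem hs1 hs2
  have hhs0 : h s ≠ 0 := by
    intro h0
    rw [h0, abs_zero] at hs1
    linarith
  obtain ⟨hI1int, hI1le⟩ := scale_bound g g' hg m hm hm' hginj D hDmeas hD0 hDint (h s) hhs0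
  obtain ⟨hI3int, hI3le⟩ := scale_bound g g' hg m hm hm' hginj D hDmeas hD0 hDint c₀ hs₀0
  have hmidint : IntegrableOn (fun t => |φ (g t * h s) - φ (g t * c₀)|) (Icc (0:ℝ) 1) :=
    (hψ (h s)).integrableOn_Icc
  -- integrability of the main integrand
  have haesm : AEStronglyMeasurable (fun t => |a (g t * h s) - a (g t * c₀)|)
      (volume.restrict (Icc (0:ℝ) 1)) := by
    have h1 : AEMeasurable (fun t => g t * h s) (volume.restrict (Icc (0:ℝ) 1)) :=
      (hgcont.mul continuousOn_const).aemeasurable measurableSet_Icc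
    have h2 : AEMeasurable (fun t => g t * c₀) (volume.restrict (Icc (0:ℝ) 1)) :=
      (hgcont.mul continuousOn_const).aemeasurable measurableSet_Icc
    exact (continuous_abs.measurable.comp_aemeasurable
      ((ha.comp_aemeasurable h1).sub (ha.comp_aemeasurable h2))).aestronglyMeasurable
  have hPint : IntegrableOn (fun t => |a (g t * h s) - a (g t * c₀)|) (Icc (0:ℝ) 1) := by
    refine Integrable.mono' (g := fun _ => 2 * M)
      (integrableOn_const measure_Icc_lt_top.ne) haesm
      (Filter.Eventually.of_forall fun t => ?_)
    have h1 := norm_sub_le (a (g t * h s)) (a (g t * c₀))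
    have h2 := haM (g t * h s)
    have h3 := haM (g t * c₀)
    rw [Real.norm_eq_abs, abs_abs]
    simp only [Real.norm_eq_abs] at h1
    linarith
  have hpt : ∀ t ∈ Icc (0:ℝ) 1, |a (g t * h s) - a (g t * c₀)| ≤
      D (g t * h s) + |φ (g t * h s) - φ (g t * c₀)| + D (g t * c₀) := by
    intro t ht
    rw [hagree t ht (h s) (hhmap hsmem), hagree t ht c₀ (hhmap hs₀)]
    have h1 := abs_sub_le (f (g t * h s)) (φ (g t * h s)) (f (g t * c₀))
    have h2 := abs_sub_le (φ (g t * h s)) (φ (g t * c₀)) (f (g t * c₀))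
    have h3 : |φ (g t * c₀) - f (g t * c₀)| = D (g t * c₀) := by
      rw [hDdef]; exact abs_sub_comm _ _
    rw [hDdef]
    simp only []
    linarith
  rw [Real.norm_eq_abs,
    abs_of_nonneg (setIntegral_nonneg measurableSet_Icc fun t ht => abs_nonneg _)]
  have hb1 : (∫ x, D x) / (|h s| * m) ≤ δ / (|c₀| / 2 * m) :=
    div_le_div₀ hδpos.le hDδ (by positivity) (mul_le_mul_of_nonneg_right hs1.le hm.le)
  have hb1' : δ / (|c₀| / 2 * m) = ε / 4 := by
    rw [hδdef]; field_simp; ring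
  have hb3 : (∫ x, D x) / (|c₀| * m) ≤ δ / (|c₀| * m) :=
    div_le_div_of_nonneg_right hDδ (by positivity)
  have hb3' : δ / (|c₀| * m) = ε / 8 := by
    rw [hδdef]; field_simp
  calc ∫ t in Icc (0:ℝ) 1, |a (g t * h s) - a (g t * c₀)|
      ≤ ∫ t in Icc (0:ℝ) 1,
          (D (g t * h s) + |φ (g t * h s) - φ (g t * c₀)| + D (g t * c₀)) :=
        setIntegral_mono_on hPint ((hI1int.add hmidint).add hI3int) measurableSet_Icc hpt
    _ = (∫ t in Icc (0:ℝ) 1, D (g t * h s))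
        + (∫ t in Icc (0:ℝ) 1, |φ (g t * h s) - φ (g t * c₀)|)
        + (∫ t in Icc (0:ℝ) 1, D (g t * c₀)) := by
        have hsum1 : Integrable
            (fun t => D (g t * h s) + |φ (g t * h s) - φ (g t * c₀)|)
            (volume.restrict (Icc (0:ℝ) 1)) := hI1int.add hmidint
        rw [integral_add hsum1 hI3int, integral_add hI1int hmidint]
    _ < ε := by
        have := hI1le.trans (hb1.trans_eq hb1')
        have := hI3le.trans (hb3.trans_eq hb3')
        linarith
end

section
/- Let P be a metric space, f : ℝ × P → ℝ^m a bounded map uniformly regular w.r.t. p ∈ P at 0, and h : P → ℝ a continuous function. Then the map (s,p) ↦ h(p)·f(s,p) is uniformly regular w.r.t. p ∈ P at 0. -/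
open MeasureTheory

/-- `f : ℝ × P → ℝ^m` (curried) is *uniformly regular with respect to `p ∈ P` at `0`* if:
(1) `t ↦ f t p` is measurable for each `p`;
(2) `(1/|t|)·∫₀ᵗ ‖f s p − f 0 p‖ ds → 0` as `t → 0`, locally uniformly in `p`;
(3) `p ↦ f 0 p` is continuous;
(4) for every compact `K ⊆ P` there is `t₀ > 0` such that `p ↦ (s ↦ f s p)` is continuous
from `K` into `L¹([0,t₀], ℝ^m)` (expressed via the `L¹` distance). -/
def UniformlyRegularAtZero {P : Type*} [MetricSpace P] {m : ℕ}
    (f : ℝ → P → EuclideanSpace ℝ (Fin m)) : Prop :=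
  (∀ p : P, Measurable fun t => f t p) ∧
  (∀ p₀ : P, ∀ ε > 0, ∃ δ > 0, ∃ U ∈ nhds p₀, ∀ p ∈ U, ∀ t : ℝ, 0 < |t| → |t| < δ →
      |(∫ s in (0 : ℝ)..t, ‖f s p - f 0 p‖) / t| < ε) ∧
  Continuous (fun p => f 0 p) ∧
  (∀ K : Set P, IsCompact K → ∃ t₀ > 0, ∀ p₀ ∈ K, ∀ ε > 0, ∃ δ > 0,
      ∀ p ∈ K, dist p p₀ < δ → (∫ s in (0 : ℝ)..t₀, ‖f s p - f s p₀‖) < ε)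

private lemma aux_ii {g : ℝ → ℝ} (hg : Measurable g) (C : ℝ) (hC : ∀ s, |g s| ≤ C)
    (a b : ℝ) : IntervalIntegrable g volume a b :=
  (intervalIntegrable_const (c := C)).mono_fun hg.aestronglyMeasurable
    (ae_of_all _ fun s => by
      simp only [Real.norm_eq_abs]
      exact (hC s).trans (le_abs_self C))

/-- Multiplying a bounded uniformly regular map by a continuous function of the parameter
preserves uniform regularity. -/
theorem stmt10 {P : Type*} [MetricSpace P] {m : ℕ}
    (f : ℝ → P → EuclideanSpace ℝ (Fin m))
    (hf : UniformlyRegularAtZero f)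
    (M : ℝ) (hbdd : ∀ (t : ℝ) (p : P), ‖f t p‖ ≤ M)
    (h : P → ℝ) (hh : Continuous h) :
    UniformlyRegularAtZero (fun t p => h p • f t p) := by
  obtain ⟨hmeas, hlim, hcont, hL1⟩ := hf
  set M' : ℝ := max M 0 with hM'
  have hM'0 : 0 ≤ M' := le_max_right _ _
  have hbdd' : ∀ t p, ‖f t p‖ ≤ M' := fun t p => (hbdd t p).trans (le_max_left _ _)
  refine ⟨fun p => (hmeas p).const_smul (h p), ?_, hh.smul hcont, ?_⟩
  · -- part (2)
    intro p₀ ε hε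
    set C : ℝ := |h p₀| + 1 with hC
    have hC0 : 0 < C := by positivity
    obtain ⟨δ, hδ, U, hU, hUP⟩ := hlim p₀ (ε / C) (by positivity)
    refine ⟨δ, hδ, U ∩ {p | |h p| < C}, Filter.inter_mem hU ?_, ?_⟩
    · have : IsOpen {p | |h p| < C} := isOpen_lt (hh.abs) continuous_const
      exact this.mem_nhds (by simp [hC])
    · rintro p ⟨hpU, hpV⟩ t ht htδ
      have key : (∫ s in (0 : ℝ)..t, ‖h p • f s p - h p • f 0 p‖)
          = |h p| * ∫ s in (0 : ℝ)..t, ‖f s p - f 0 p‖ := by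
        simp_rw [← smul_sub, norm_smul, Real.norm_eq_abs,
          intervalIntegral.integral_const_mul]
      rw [key, mul_div_assoc, abs_mul, abs_abs]
      calc |h p| * |(∫ s in (0 : ℝ)..t, ‖f s p - f 0 p‖) / t|
          ≤ C * |(∫ s in (0 : ℝ)..t, ‖f s p - f 0 p‖) / t| :=
            mul_le_mul_of_nonneg_right hpV.le (abs_nonneg _)
        _ < C * (ε / C) :=
            mul_lt_mul_of_pos_left (hUP p hpU t ht htδ) hC0
        _ = ε := by field_simp
  · -- part (4)
    intro K hK
    obtain ⟨t₀, ht₀, H⟩ := hL1 K hK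
    obtain ⟨C₀, hC₀⟩ := hK.exists_bound_of_continuousOn hh.continuousOn
    set C : ℝ := max C₀ 1 with hCdef
    have hC1 : (1 : ℝ) ≤ C := le_max_right _ _
    have hC0 : 0 < C := lt_of_lt_of_le one_pos hC1
    have hCb : ∀ p ∈ K, |h p| ≤ C := fun p hp => by
      calc |h p| = ‖h p‖ := (Real.norm_eq_abs _).symm
        _ ≤ C₀ := hC₀ p hp
        _ ≤ C := le_max_left _ _
    refine ⟨t₀, ht₀, fun p₀ hp₀ ε hε => ?_⟩
    obtain ⟨δ₁, hδ₁, H1⟩ := H p₀ hp₀ (ε / (2 * C)) (by positivity)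
    have hcont' : ∀ ε' > 0, ∃ δ > 0, ∀ p, dist p p₀ < δ → |h p - h p₀| < ε' := by
      intro ε' hε'
      have := Metric.continuous_iff.mp hh p₀ ε' hε'
      obtain ⟨δ, hδ, hd⟩ := this
      exact ⟨δ, hδ, fun p hp => by simpa [Real.dist_eq] using hd p hp⟩
    obtain ⟨δ₂, hδ₂, H2⟩ := hcont' (ε / (2 * (M' * t₀ + 1))) (by positivity)
    refine ⟨min δ₁ δ₂, lt_min hδ₁ hδ₂, fun p hp hdist => ?_⟩
    have hd₁ := lt_of_lt_of_le hdist (min_le_left _ _)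
    have hd₂ := lt_of_lt_of_le hdist (min_le_right _ _)
    set I : ℝ := ∫ s in (0 : ℝ)..t₀, ‖f s p - f s p₀‖ with hI
    have hInn : 0 ≤ I :=
      intervalIntegral.integral_nonneg ht₀.le (fun s _ => norm_nonneg _)
    set d : ℝ := |h p - h p₀| with hd
    have hdnn : 0 ≤ d := abs_nonneg _
    -- pointwise bound
    have hpw : ∀ s, ‖h p • f s p - h p₀ • f s p₀‖
        ≤ |h p| * ‖f s p - f s p₀‖ + d * M' := by
      intro s
      have : h p • f s p - h p₀ • f s p₀
          = h p • (f s p - f s p₀) + (h p - h p₀) • f s p₀ := by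
        simp only [smul_sub, sub_smul]; abel
      rw [this]
      calc ‖h p • (f s p - f s p₀) + (h p - h p₀) • f s p₀‖
          ≤ ‖h p • (f s p - f s p₀)‖ + ‖(h p - h p₀) • f s p₀‖ := norm_add_le _ _
        _ = |h p| * ‖f s p - f s p₀‖ + d * ‖f s p₀‖ := by
            rw [norm_smul, norm_smul, Real.norm_eq_abs, Real.norm_eq_abs]
        _ ≤ |h p| * ‖f s p - f s p₀‖ + d * M' := by
            gcongr; exact hbdd' s p₀
    -- integrability
    have hmeas1 : Measurable fun s => ‖h p • f s p - h p₀ • f s p₀‖ :=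
      (((hmeas p).const_smul (h p)).sub ((hmeas p₀).const_smul (h p₀))).norm
    have hmeas2 : Measurable fun s => ‖f s p - f s p₀‖ :=
      ((hmeas p).sub (hmeas p₀)).norm
    have hii1 : IntervalIntegrable (fun s => ‖h p • f s p - h p₀ • f s p₀‖)
        volume 0 t₀ := by
      refine aux_ii hmeas1 (|h p| * M' + |h p₀| * M') (fun s => ?_) 0 t₀
      rw [abs_of_nonneg (norm_nonneg _)]
      calc ‖h p • f s p - h p₀ • f s p₀‖
          ≤ ‖h p • f s p‖ + ‖h p₀ • f s p₀‖ := norm_sub_le _ _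
        _ ≤ |h p| * M' + |h p₀| * M' := by
            rw [norm_smul, norm_smul, Real.norm_eq_abs, Real.norm_eq_abs]
            gcongr <;> [exact hbdd' s p; exact hbdd' s p₀]
    have hii2 : IntervalIntegrable (fun s => ‖f s p - f s p₀‖) volume 0 t₀ := by
      refine aux_ii hmeas2 (2 * M') (fun s => ?_) 0 t₀
      rw [abs_of_nonneg (norm_nonneg _), two_mul]
      exact (norm_sub_le _ _).trans (add_le_add (hbdd' s p) (hbdd' s p₀))
    have hii3 : IntervalIntegrable (fun s => |h p| * ‖f s p - f s p₀‖ + d * M')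
        volume 0 t₀ := ((hii2.const_mul _).add intervalIntegrable_const)
    -- integral bound
    have hstep : (∫ s in (0 : ℝ)..t₀, ‖h p • f s p - h p₀ • f s p₀‖)
        ≤ |h p| * I + d * M' * t₀ := by
      have := intervalIntegral.integral_mono_on ht₀.le hii1 hii3 (fun s _ => hpw s)
      calc (∫ s in (0 : ℝ)..t₀, ‖h p • f s p - h p₀ • f s p₀‖)
          ≤ ∫ s in (0 : ℝ)..t₀, (|h p| * ‖f s p - f s p₀‖ + d * M') := this
        _ = |h p| * I + d * M' * t₀ := by
            rw [intervalIntegral.integral_add (hii2.const_mul _) intervalIntegrable_const,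
              intervalIntegral.integral_const_mul, intervalIntegral.integral_const]
            simp [hI]; ring
    refine lt_of_le_of_lt hstep ?_
    have h1 : |h p| * I ≤ C * I := mul_le_mul_of_nonneg_right (hCb p hp) hInn
    have h2 : C * I < C * (ε / (2 * C)) :=
      mul_lt_mul_of_pos_left (H1 p hp hd₁) hC0
    have h3 : d * M' * t₀ < ε / (2 * (M' * t₀ + 1)) * (M' * t₀ + 1) := by
      calc d * M' * t₀ ≤ d * (M' * t₀ + 1) := by
            rw [mul_assoc]; gcongr; linarith
        _ < ε / (2 * (M' * t₀ + 1)) * (M' * t₀ + 1) := by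
            have hpos : 0 < M' * t₀ + 1 := by positivity
            exact mul_lt_mul_of_pos_right (H2 p hd₂) hpos
    have e1 : C * (ε / (2 * C)) = ε / 2 := by field_simp
    have e2 : ε / (2 * (M' * t₀ + 1)) * (M' * t₀ + 1) = ε / 2 := by
      have : (M' * t₀ + 1) ≠ 0 := by positivity
      field_simp
    calc |h p| * I + d * M' * t₀
        < C * (ε / (2 * C)) + ε / (2 * (M' * t₀ + 1)) * (M' * t₀ + 1) := by
          have := lt_of_le_of_lt h1 h2
          linarith
      _ = ε := by rw [e1, e2]; ring
end

section
/- Let P, Q be metric spaces, f : ℝ × P → ℝ^m bounded and uniformly regular w.r.t. p ∈ P at 0, and G : ℝ^m × ℝ × P × Q → ℝ^m continuous. Then the composition (s, p, q) ↦ G(f(s,p), s, p, q) is uniformly regular w.r.t. (p,q) ∈ P × Q at s = 0. -/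
open MeasureTheory

lemma myII_of_bound {g : ℝ → ℝ} (hg : Measurable g) {a b C : ℝ}
    (h : ∀ s ∈ Set.uIcc a b, |g s| ≤ C) : IntervalIntegrable g volume a b := by
  rw [intervalIntegrable_iff]
  refine Integrable.mono' (g := fun _ => C) ?_ hg.aestronglyMeasurable ?_
  · exact integrableOn_const (by rw [Set.uIoc]; exact measure_Ioc_lt_top.ne)
  · refine (ae_restrict_iff' measurableSet_uIoc).2 (ae_of_all _ fun s hs => ?_)
    simpa [Real.norm_eq_abs] using h s (Set.uIoc_subset_uIcc hs)

lemma myIntBound {φ ψ : ℝ → ℝ} {a b k c : ℝ} (hab : a ≤ b)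
    (hφ : IntervalIntegrable φ volume a b) (hψ : IntervalIntegrable ψ volume a b)
    (hle : ∀ s ∈ Set.Icc a b, φ s ≤ k + c * ψ s) :
    (∫ s in a..b, φ s) ≤ k * (b - a) + c * ∫ s in a..b, ψ s := by
  have h2 : IntervalIntegrable (fun s => k + c * ψ s) volume a b :=
    intervalIntegrable_const.add (hψ.const_mul c)
  have := intervalIntegral.integral_mono_on hab hφ h2 hle
  rwa [intervalIntegral.integral_add intervalIntegrable_const (hψ.const_mul c),
    intervalIntegral.integral_const, intervalIntegral.integral_const_mul, smul_eq_mul,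
    mul_comm (b - a) k] at this

lemma myAbsIntBound {φ ψ : ℝ → ℝ} {t k c : ℝ}
    (hφ : IntervalIntegrable φ volume 0 t) (hψ : IntervalIntegrable ψ volume 0 t)
    (hφ0 : ∀ s ∈ Set.uIcc 0 t, 0 ≤ φ s) (hψ0 : ∀ s ∈ Set.uIcc 0 t, 0 ≤ ψ s)
    (hle : ∀ s ∈ Set.uIcc 0 t, φ s ≤ k + c * ψ s) :
    |∫ s in (0:ℝ)..t, φ s| ≤ k * |t| + c * |∫ s in (0:ℝ)..t, ψ s| := by
  rcases le_or_gt 0 t with ht | ht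
  · rw [Set.uIcc_of_le ht] at hφ0 hψ0 hle
    rw [abs_of_nonneg (intervalIntegral.integral_nonneg ht hφ0),
        abs_of_nonneg (intervalIntegral.integral_nonneg ht hψ0),
        abs_of_nonneg ht]
    simpa using myIntBound ht hφ hψ hle
  · have huIcc : Set.uIcc 0 t = Set.Icc t 0 := by
      rw [Set.uIcc_comm]; exact Set.uIcc_of_le ht.le
    rw [huIcc] at hφ0 hψ0 hle
    rw [intervalIntegral.integral_symm, intervalIntegral.integral_symm (f := ψ),
        abs_neg, abs_neg,
        abs_of_nonneg (intervalIntegral.integral_nonneg ht.le hφ0),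
        abs_of_nonneg (intervalIntegral.integral_nonneg ht.le hψ0),
        abs_of_neg ht]
    have := myIntBound ht.le hφ.symm hψ.symm hle
    linarith

lemma quadDistLt {E P Q : Type*} [PseudoMetricSpace E] [PseudoMetricSpace P] [PseudoMetricSpace Q]
    {x x' : E} {s s' : ℝ} {p p' : P} {q q' : Q} {r : ℝ}
    (h1 : dist x x' < r) (h2 : dist s s' < r) (h3 : dist p p' < r) (h4 : dist q q' < r) :
    dist ((x, s, p, q) : E × ℝ × P × Q) (x', s', p', q') < r := by
  simp only [Prod.dist_eq, max_lt_iff]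
  exact ⟨h1, h2, h3, h4⟩

lemma absLeOfMemUIcc {s t : ℝ} (hs : s ∈ Set.uIcc 0 t) : |s| ≤ |t| := by
  rcases le_total 0 t with h | h
  · rw [Set.uIcc_of_le h] at hs
    rw [abs_of_nonneg h]; exact abs_le.2 ⟨by linarith [hs.1], hs.2⟩
  · rw [Set.uIcc_comm, Set.uIcc_of_le h] at hs
    rw [abs_of_nonpos h]; exact abs_le.2 ⟨by linarith [hs.1], by linarith [hs.2]⟩


set_option maxHeartbeats 1000000

/-- Composing a bounded uniformly regular map with a continuous map
`G : ℝ^m × ℝ × P × Q → ℝ^m` preserves uniform regularity (with respect to the joint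
parameter `(p,q) ∈ P × Q`). -/
theorem stmt12 {P Q : Type*} [MetricSpace P] [MetricSpace Q] {m : ℕ}
    (f : ℝ → P → EuclideanSpace ℝ (Fin m))
    (hf : UniformlyRegularAtZero f)
    (M : ℝ) (hbdd : ∀ (t : ℝ) (p : P), ‖f t p‖ ≤ M)
    (G : EuclideanSpace ℝ (Fin m) × ℝ × P × Q → EuclideanSpace ℝ (Fin m))
    (hG : Continuous G) :
    UniformlyRegularAtZero (fun s (pq : P × Q) => G (f s pq.1, s, pq.1, pq.2)) := by
  obtain ⟨hmeas, hreg, hcont, hL1all⟩ := hf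
  refine ⟨?_, ?_, ?_, ?_⟩
  · intro pq
    have hout : Continuous fun xs : EuclideanSpace ℝ (Fin m) × ℝ =>
        G (xs.1, xs.2, pq.1, pq.2) := hG.comp (by fun_prop)
    exact hout.measurable.comp ((hmeas pq.1).prodMk measurable_id)
  · -- condition (2)
    rintro ⟨p₀, q₀⟩ ε hε
    have hM : (0:ℝ) ≤ M := le_trans (norm_nonneg _) (hbdd 0 p₀)
    set x₀ := f 0 p₀ with hx₀def
    set z₀ : EuclideanSpace ℝ (Fin m) × ℝ × P × Q := (x₀, 0, p₀, q₀) with hz₀def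
    -- tube lemma bound
    set S : Set (EuclideanSpace ℝ (Fin m) × ℝ) :=
      Metric.closedBall 0 M ×ˢ Set.Icc (-1:ℝ) 1 with hSdef
    have hS : IsCompact S := (isCompact_closedBall _ _).prod isCompact_Icc
    set g : (EuclideanSpace ℝ (Fin m) × ℝ) × (P × Q) → ℝ :=
      fun z => ‖G (z.1.1, z.1.2, z.2.1, z.2.2)‖ with hgdef
    have hgc : Continuous g := (hG.comp (by fun_prop)).norm
    obtain ⟨C₀, hC₀⟩ := (hS.prod isCompact_singleton).exists_bound_of_continuousOn
      hgc.continuousOn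
    set C := C₀ + 1 with hCdef
    have hz₀S : ((x₀, (0:ℝ)), (p₀, q₀)) ∈ S ×ˢ ({(p₀, q₀)} : Set (P × Q)) := by
      refine ⟨⟨?_, ?_⟩, rfl⟩
      · exact Metric.mem_closedBall.2 (by simpa [dist_eq_norm] using hbdd 0 p₀)
      · constructor <;> norm_num
    have hCpos : 0 < C := by
      have := hC₀ _ hz₀S
      have h0 : (0:ℝ) ≤ ‖g ((x₀, (0:ℝ)), (p₀, q₀))‖ := norm_nonneg _
      simp only [hCdef]; linarith
    have hsub : S ×ˢ ({(p₀, q₀)} : Set (P × Q)) ⊆ g ⁻¹' Set.Iio C := by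
      intro z hz
      have := hC₀ z hz
      have : g z ≤ C₀ := le_trans (le_abs_self _) this
      simpa [hCdef] using lt_of_le_of_lt this (by linarith)
    obtain ⟨u, v, hu, hv, hSu, hv0, huv⟩ :=
      generalized_tube_lemma hS isCompact_singleton (isOpen_Iio.preimage hgc) hsub
    have hpqv : (p₀, q₀) ∈ v := hv0 rfl
    have hCv : ∀ (x : EuclideanSpace ℝ (Fin m)) (s : ℝ) (p : P) (q : Q),
        ‖x‖ ≤ M → |s| ≤ 1 → (p, q) ∈ v → ‖G (x, s, p, q)‖ ≤ C := by
      intro x s p q hx hs hpq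
      have hmem : ((x, s), (p, q)) ∈ u ×ˢ v := by
        refine ⟨hSu ⟨?_, ?_⟩, hpq⟩
        · exact Metric.mem_closedBall.2 (by simpa [dist_eq_norm] using hx)
        · exact ⟨by linarith [abs_le.1 hs |>.1], (abs_le.1 hs).2⟩
      have h := huv hmem
      simp only [Set.mem_preimage, Set.mem_Iio, hgdef] at h
      exact le_of_lt h
    -- continuity of G at z₀
    obtain ⟨η₁, hη₁, hηball⟩ := Metric.continuous_iff.1 hG z₀ (ε/4) (by positivity)
    set η := min η₁ 1 with hηdef
    have hη : 0 < η := lt_min hη₁ one_pos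
    have hη1 : η ≤ 1 := min_le_right _ _
    have hηle : η ≤ η₁ := min_le_left _ _
    obtain ⟨δ₁, hδ₁, U₁, hU₁, hU₁reg⟩ := hreg p₀ (ε * η / (8 * C)) (by positivity)
    refine ⟨min δ₁ η, lt_min hδ₁ hη,
      ((U₁ ∩ (fun p => f 0 p) ⁻¹' Metric.ball x₀ (η/2) ∩ Metric.ball p₀ η)
        ×ˢ Metric.ball q₀ η) ∩ v, ?_, ?_⟩
    · refine Filter.inter_mem ?_ (hv.mem_nhds hpqv)
      refine prod_mem_nhds ?_ (Metric.ball_mem_nhds _ hη)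
      exact Filter.inter_mem
        (Filter.inter_mem hU₁
          (hcont.continuousAt.preimage_mem_nhds (Metric.ball_mem_nhds _ (by positivity))))
        (Metric.ball_mem_nhds _ hη)
    · rintro ⟨p, q⟩ ⟨⟨⟨⟨hpU₁, hpf⟩, hpb⟩, hqb⟩, hpqv'⟩ t ht htδ
      have htη : |t| < η := lt_of_lt_of_le htδ (min_le_right _ _)
      have htδ₁ : |t| < δ₁ := lt_of_lt_of_le htδ (min_le_left _ _)
      have hpf' : ‖f 0 p - x₀‖ < η/2 := by
        simpa [dist_eq_norm] using hpf
      have hpb' : dist p p₀ < η := hpb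
      have hqb' : dist q q₀ < η := hqb
      have hG0 : ‖G (f 0 p, 0, p, q) - G z₀‖ < ε/4 := by
        have := hηball (f 0 p, 0, p, q)
          (quadDistLt (by rw [dist_eq_norm]; linarith)
            (by simpa using hη₁) (lt_of_lt_of_le hpb' hηle) (lt_of_lt_of_le hqb' hηle))
        simpa [dist_eq_norm] using this
      have key : ∀ s ∈ Set.uIcc 0 t,
          ‖G (f s p, s, p, q) - G (f 0 p, 0, p, q)‖ ≤ ε/2 + (4*C/η) * ‖f s p - f 0 p‖ := by
        intro s hs
        have hsη : |s| < η := lt_of_le_of_lt (absLeOfMemUIcc hs) htη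
        rcases lt_or_ge ‖f s p - f 0 p‖ (η/2) with hcase | hcase
        · have hGs : ‖G (f s p, s, p, q) - G z₀‖ < ε/4 := by
            have hxs : ‖f s p - x₀‖ < η := by
              calc ‖f s p - x₀‖ ≤ ‖f s p - f 0 p‖ + ‖f 0 p - x₀‖ := norm_sub_le_norm_sub_add_norm_sub _ _ _
                _ < η/2 + η/2 := by linarith
                _ = η := by ring
            have := hηball (f s p, s, p, q)
              (quadDistLt (by rw [dist_eq_norm]; exact lt_of_lt_of_le hxs hηle)
                (by simpa [Real.dist_eq] using lt_of_lt_of_le hsη hηle)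
                (lt_of_lt_of_le hpb' hηle) (lt_of_lt_of_le hqb' hηle))
            simpa [dist_eq_norm] using this
          have h1 : ‖G (f s p, s, p, q) - G (f 0 p, 0, p, q)‖
              ≤ ‖G (f s p, s, p, q) - G z₀‖ + ‖G (f 0 p, 0, p, q) - G z₀‖ := by
            have := dist_triangle (G (f s p, s, p, q)) (G z₀) (G (f 0 p, 0, p, q))
            simpa [dist_eq_norm, norm_sub_rev (G (f 0 p, 0, p, q))] using this
          have hrhs : 0 ≤ (4*C/η) * ‖f s p - f 0 p‖ := by positivity
          linarith
        · have hb1 : ‖G (f s p, s, p, q)‖ ≤ C :=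
            hCv _ _ _ _ (hbdd s p) (le_trans hsη.le hη1) hpqv'
          have hb2 : ‖G (f 0 p, 0, p, q)‖ ≤ C :=
            hCv _ _ _ _ (hbdd 0 p) (by norm_num) hpqv'
          have h2C : (4*C/η) * (η/2) = 2*C := by field_simp; ring
          have hge : 2*C ≤ (4*C/η) * ‖f s p - f 0 p‖ := by
            rw [← h2C]
            exact mul_le_mul_of_nonneg_left hcase (by positivity)
          have := norm_sub_le (G (f s p, s, p, q)) (G (f 0 p, 0, p, q))
          linarith
      -- integrability
      have hout : Continuous fun xs : EuclideanSpace ℝ (Fin m) × ℝ =>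
          G (xs.1, xs.2, p, q) := hG.comp (by fun_prop)
      have hΦmeas : Measurable fun s => ‖G (f s p, s, p, q) - G (f 0 p, 0, p, q)‖ :=
        ((hout.measurable.comp ((hmeas p).prodMk measurable_id)).sub measurable_const).norm
      have hΦint : IntervalIntegrable (fun s => ‖G (f s p, s, p, q) - G (f 0 p, 0, p, q)‖)
          volume 0 t := by
        refine myII_of_bound hΦmeas (C := 2*C) fun s hs => ?_
        have hsη : |s| ≤ 1 := le_trans (le_of_lt (lt_of_le_of_lt (absLeOfMemUIcc hs) htη)) hη1
        have hb1 : ‖G (f s p, s, p, q)‖ ≤ C := hCv _ _ _ _ (hbdd s p) hsη hpqv'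
        have hb2 : ‖G (f 0 p, 0, p, q)‖ ≤ C := hCv _ _ _ _ (hbdd 0 p) (by norm_num) hpqv'
        rw [abs_of_nonneg (norm_nonneg _)]
        have := norm_sub_le (G (f s p, s, p, q)) (G (f 0 p, 0, p, q))
        linarith
      have hψint : IntervalIntegrable (fun s => ‖f s p - f 0 p‖) volume 0 t := by
        refine myII_of_bound (((hmeas p).sub measurable_const).norm) (C := 2*M) fun s _ => ?_
        rw [abs_of_nonneg (norm_nonneg _)]
        have := norm_sub_le (f s p) (f 0 p)
        show ‖f s p - f 0 p‖ ≤ 2*M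
        linarith [hbdd s p, hbdd 0 p]
      have hmain := myAbsIntBound (k := ε/2) (c := 4*C/η) hΦint hψint
        (fun s _ => norm_nonneg _) (fun s _ => norm_nonneg _) key
      have hJ := hU₁reg p hpU₁ t ht htδ₁
      rw [abs_div, div_lt_iff₀ ht] at hJ ⊢
      have heq : (4*C/η) * ((ε * η / (8 * C)) * |t|) = (ε/2) * |t| := by
        field_simp; ring
      have h4 : (4*C/η) * |∫ s in (0:ℝ)..t, ‖f s p - f 0 p‖|
          < (4*C/η) * ((ε * η / (8 * C)) * |t|) :=
        mul_lt_mul_of_pos_left hJ (by positivity)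
      calc |∫ s in (0:ℝ)..t, ‖G (f s p, s, p, q) - G (f 0 p, 0, p, q)‖|
          ≤ (ε/2) * |t| + (4*C/η) * |∫ s in (0:ℝ)..t, ‖f s p - f 0 p‖| := hmain
        _ < (ε/2) * |t| + (ε/2) * |t| := by rw [← heq]; linarith
        _ = ε * |t| := by ring
  · exact hG.comp ((hcont.comp continuous_fst).prodMk (continuous_const.prodMk continuous_id))
  · -- condition (4)
    intro K hK
    obtain ⟨t₀, ht₀, hL1⟩ := hL1all (Prod.fst '' K) (hK.image continuous_fst)
    refine ⟨t₀, ht₀, ?_⟩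
    rintro ⟨p₀, q₀⟩ hpq₀ ε hε
    have hM : (0:ℝ) ≤ M := le_trans (norm_nonneg _) (hbdd 0 p₀)
    set K₁ := Prod.fst '' K with hK₁def
    set K₂ := Prod.snd '' K with hK₂def
    have hK₁ : IsCompact K₁ := hK.image continuous_fst
    have hK₂ : IsCompact K₂ := hK.image continuous_snd
    set T : Set (EuclideanSpace ℝ (Fin m) × ℝ × P × Q) :=
      Metric.closedBall 0 M ×ˢ Set.Icc (0:ℝ) t₀ ×ˢ K₁ ×ˢ K₂ with hTdef
    have hT : IsCompact T := (isCompact_closedBall _ _).prod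
      (isCompact_Icc.prod (hK₁.prod hK₂))
    obtain ⟨C₀, hC₀⟩ := hT.exists_bound_of_continuousOn hG.continuousOn
    set C := C₀ + 1 with hCdef
    have hp₀₁ : p₀ ∈ K₁ := ⟨(p₀,q₀), hpq₀, rfl⟩
    have hq₀₂ : q₀ ∈ K₂ := ⟨(p₀,q₀), hpq₀, rfl⟩
    have hmemT : ∀ (x : EuclideanSpace ℝ (Fin m)) (s : ℝ) (p : P) (q : Q),
        ‖x‖ ≤ M → s ∈ Set.Icc (0:ℝ) t₀ → p ∈ K₁ → q ∈ K₂ → (x, s, p, q) ∈ T := by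
      intro x s p q hx hs hp hq
      exact ⟨Metric.mem_closedBall.2 (by simpa [dist_eq_norm] using hx), hs, hp, hq⟩
    have hCbd : ∀ z ∈ T, ‖G z‖ ≤ C := fun z hz => le_trans (hC₀ z hz) (by simp [hCdef])
    have hCpos : 0 < C := by
      have h1 := hC₀ _ (hmemT (f 0 p₀) 0 p₀ q₀ (hbdd 0 p₀) ⟨le_refl _, ht₀.le⟩ hp₀₁ hq₀₂)
      have h2 : (0:ℝ) ≤ ‖G (f 0 p₀, 0, p₀, q₀)‖ := norm_nonneg _
      simp only [hCdef]; linarith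
    obtain ⟨η₀, hη₀, hUC⟩ := Metric.uniformContinuousOn_iff.1
      (hT.uniformContinuousOn_of_continuous hG.continuousOn) (ε/(2*(t₀+1))) (by positivity)
    set η := min η₀ 1 with hηdef
    have hη : 0 < η := lt_min hη₀ one_pos
    have hηle : η ≤ η₀ := min_le_left _ _
    obtain ⟨δ', hδ', hδ'reg⟩ := hL1 p₀ hp₀₁ (ε*η/(8*C)) (by positivity)
    refine ⟨min δ' η, lt_min hδ' hη, ?_⟩
    rintro ⟨p, q⟩ hpqK hdist
    have hp₁ : p ∈ K₁ := ⟨(p,q), hpqK, rfl⟩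
    have hq₂ : q ∈ K₂ := ⟨(p,q), hpqK, rfl⟩
    rw [Prod.dist_eq, max_lt_iff] at hdist
    have hdp : dist p p₀ < δ' := lt_of_lt_of_le hdist.1 (min_le_left _ _)
    have hdpη : dist p p₀ < η := lt_of_lt_of_le hdist.1 (min_le_right _ _)
    have hdqη : dist q q₀ < η := lt_of_lt_of_le hdist.2 (min_le_right _ _)
    have key : ∀ s ∈ Set.Icc (0:ℝ) t₀,
        ‖G (f s p, s, p, q) - G (f s p₀, s, p₀, q₀)‖
          ≤ ε/(2*(t₀+1)) + (4*C/η) * ‖f s p - f s p₀‖ := by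
      intro s hs
      have hzT := hmemT (f s p) s p q (hbdd s p) hs hp₁ hq₂
      have hzT' := hmemT (f s p₀) s p₀ q₀ (hbdd s p₀) hs hp₀₁ hq₀₂
      rcases lt_or_ge ‖f s p - f s p₀‖ η with hcase | hcase
      · have hd := hUC _ hzT _ hzT' (quadDistLt
          (by rw [dist_eq_norm]; exact lt_of_lt_of_le hcase hηle)
          (by simpa using lt_of_lt_of_le hη hηle)
          (lt_of_lt_of_le hdpη hηle) (lt_of_lt_of_le hdqη hηle))
        rw [dist_eq_norm] at hd
        have hrhs : 0 ≤ (4*C/η) * ‖f s p - f s p₀‖ := by positivity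
        linarith
      · have hb1 := hCbd _ hzT
        have hb2 := hCbd _ hzT'
        have h2C : (4*C/η) * η = 4*C := by field_simp
        have hge : 2*C ≤ (4*C/η) * ‖f s p - f s p₀‖ := by
          have := mul_le_mul_of_nonneg_left hcase (le_of_lt (show (0:ℝ) < 4*C/η by positivity))
          nlinarith
        have := norm_sub_le (G (f s p, s, p, q)) (G (f s p₀, s, p₀, q₀))
        have hknn : (0:ℝ) ≤ ε/(2*(t₀+1)) := by positivity
        linarith
    have hout : Continuous fun xs : EuclideanSpace ℝ (Fin m) × ℝ =>
        G (xs.1, xs.2, p, q) := hG.comp (by fun_prop)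
    have hout' : Continuous fun xs : EuclideanSpace ℝ (Fin m) × ℝ =>
        G (xs.1, xs.2, p₀, q₀) := hG.comp (by fun_prop)
    have hΦmeas : Measurable fun s => ‖G (f s p, s, p, q) - G (f s p₀, s, p₀, q₀)‖ :=
      ((hout.measurable.comp ((hmeas p).prodMk measurable_id)).sub
        (hout'.measurable.comp ((hmeas p₀).prodMk measurable_id))).norm
    have huIcc : Set.uIcc (0:ℝ) t₀ = Set.Icc 0 t₀ := Set.uIcc_of_le ht₀.le
    have hΦint : IntervalIntegrable (fun s => ‖G (f s p, s, p, q) - G (f s p₀, s, p₀, q₀)‖)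
        volume 0 t₀ := by
      refine myII_of_bound hΦmeas (C := 2*C) fun s hs => ?_
      rw [huIcc] at hs
      have hb1 := hCbd _ (hmemT (f s p) s p q (hbdd s p) hs hp₁ hq₂)
      have hb2 := hCbd _ (hmemT (f s p₀) s p₀ q₀ (hbdd s p₀) hs hp₀₁ hq₀₂)
      rw [abs_of_nonneg (norm_nonneg _)]
      have := norm_sub_le (G (f s p, s, p, q)) (G (f s p₀, s, p₀, q₀))
      linarith
    have hψint : IntervalIntegrable (fun s => ‖f s p - f s p₀‖) volume 0 t₀ := by
      refine myII_of_bound (((hmeas p).sub (hmeas p₀)).norm) (C := 2*M) fun s _ => ?_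
      rw [abs_of_nonneg (norm_nonneg _)]
      have := norm_sub_le (f s p) (f s p₀)
      show ‖f s p - f s p₀‖ ≤ 2*M
      linarith [hbdd s p, hbdd s p₀]
    have hmain := myIntBound ht₀.le hΦint hψint key
    have hJ := hδ'reg p hp₁ hdp
    have heq : (4*C/η) * (ε * η / (8 * C)) = ε/2 := by field_simp; ring
    have h4 : (4*C/η) * (∫ s in (0:ℝ)..t₀, ‖f s p - f s p₀‖) < ε/2 := by
      rw [← heq]
      exact mul_lt_mul_of_pos_left hJ (by positivity)
    have h1 : (ε/(2*(t₀+1))) * (t₀ - 0) ≤ ε/2 := by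
      rw [sub_zero, div_mul_eq_mul_div, div_le_div_iff₀ (by positivity) (by norm_num)]
      nlinarith
    show (∫ s in (0:ℝ)..t₀, ‖G (f s p, s, p, q) - G (f s p₀, s, p₀, q₀)‖) < ε
    calc (∫ s in (0:ℝ)..t₀, ‖G (f s p, s, p, q) - G (f s p₀, s, p₀, q₀)‖)
        ≤ (ε/(2*(t₀+1))) * (t₀ - 0) + (4*C/η) * ∫ s in (0:ℝ)..t₀, ‖f s p - f s p₀‖ := hmain
      _ < ε/2 + ε/2 := by linarith
      _ = ε := by ring
end
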